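/- arXiv:2208.07896 — 2 statements merged into one kernel-verified Lean document; each statement's English description precedes it below -/
import Mathlib

section
/- For k = 2 and c* > 0, let u_{c*}(ξ) = √(2c*) sech(√c* ξ) and ψ*(ξ) = 2c* sech²(√c* ξ). Then the function w₀ = ½(u_{c*}³ - 4c* u_{c*}) satisfies L_{c*} w₀ = (3/2) u_{c*} ψ*², where L_{c*} = -d²/dξ² + c* - 3u_{c*}². -/
noncomputable def sech (x : ℝ) : ℝ := 2 / (Real.exp x + Real.exp (-x))

theorem w0_solves_inhomogeneous_eq
    (cs : ℝ) (hcs : 0 < cs) (u ψ w₀ : ℝ → ℝ)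
    (hu : ∀ ξ : ℝ, u ξ = Real.sqrt (2 * cs) * sech (Real.sqrt cs * ξ))
    (hψ : ∀ ξ : ℝ, ψ ξ = 2 * cs * sech (Real.sqrt cs * ξ) ^ 2)
    (hw : ∀ ξ : ℝ, w₀ ξ = (1 / 2) * ((u ξ) ^ 3 - 4 * cs * u ξ)) :
    ∀ ξ : ℝ, -(deriv (deriv w₀)) ξ + cs * w₀ ξ - 3 * (u ξ) ^ 2 * w₀ ξ
      = (3 / 2) * u ξ * (ψ ξ) ^ 2 := by
  intro ξ
  have hcs' : (0:ℝ) ≤ cs := hcs.le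
  set s := Real.sqrt cs with hs_def
  have hs2 : s ^ 2 = cs := Real.sq_sqrt hcs'
  set r := Real.sqrt (2 * cs) with hr_def
  have hr2 : r ^ 2 = 2 * cs := Real.sq_sqrt (by linarith)
  have hr3 : r ^ 3 = 2 * cs * r := by
    rw [pow_succ, hr2]
  have hSpos : ∀ x : ℝ, 0 < Real.exp (s*x) + Real.exp (-(s*x)) := fun x => by positivity
  have hSne : ∀ x : ℝ, Real.exp (s*x) + Real.exp (-(s*x)) ≠ 0 := fun x => (hSpos x).ne'
  have hw₀fun : w₀ = fun x => cs * r *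
      (8 * ((Real.exp (s*x) + Real.exp (-(s*x)))^3)⁻¹
        - 4 * ((Real.exp (s*x) + Real.exp (-(s*x))))⁻¹) := by
    funext x
    rw [hw x, hu x]
    simp only [sech]
    rw [mul_pow, hr3]
    have h := hSne x
    field_simp
    ring
  have hlin : ∀ x : ℝ, HasDerivAt (fun y : ℝ => s * y) s x := fun x => by
    simpa using (hasDerivAt_id x).const_mul s
  have hS : ∀ x : ℝ, HasDerivAt (fun y => Real.exp (s*y) + Real.exp (-(s*y)))
      (s * (Real.exp (s*x) - Real.exp (-(s*x)))) x := by
    intro x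
    refine (((hlin x).exp).add (((hlin x).neg).exp)).congr_deriv ?_
    simp only [Pi.neg_apply, Pi.pow_apply]
    ring
  have hT : ∀ x : ℝ, HasDerivAt (fun y => Real.exp (s*y) - Real.exp (-(s*y)))
      (s * (Real.exp (s*x) + Real.exp (-(s*x)))) x := by
    intro x
    refine (((hlin x).exp).sub (((hlin x).neg).exp)).congr_deriv ?_
    simp only [Pi.neg_apply, Pi.pow_apply]
    ring
  have hD1 : ∀ x : ℝ, HasDerivAt w₀
      (cs * r * (s * (Real.exp (s*x) - Real.exp (-(s*x))) *
        (-24 * ((Real.exp (s*x) + Real.exp (-(s*x)))^4)⁻¹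
          + 4 * ((Real.exp (s*x) + Real.exp (-(s*x)))^2)⁻¹))) x := by
    intro x
    rw [hw₀fun]
    have hne := hSne x
    have h3 := (((hS x).pow 3).inv (pow_ne_zero 3 hne)).const_mul (8:ℝ)
    have h1 := (((hS x).inv hne)).const_mul (4:ℝ)
    refine ((h3.sub h1).const_mul (cs * r)).congr_deriv ?_
    simp only [Pi.neg_apply, Pi.pow_apply]
    have := hSpos x
    field_simp
    ring
  have hdw : deriv w₀ = fun x => cs * r * (s * (Real.exp (s*x) - Real.exp (-(s*x))) *
        (-24 * ((Real.exp (s*x) + Real.exp (-(s*x)))^4)⁻¹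
          + 4 * ((Real.exp (s*x) + Real.exp (-(s*x)))^2)⁻¹)) :=
    funext fun x => (hD1 x).deriv
  have hne := hSne ξ
  have hD2 : HasDerivAt (fun x => cs * r * (s * (Real.exp (s*x) - Real.exp (-(s*x))) *
        (-24 * ((Real.exp (s*x) + Real.exp (-(s*x)))^4)⁻¹
          + 4 * ((Real.exp (s*x) + Real.exp (-(s*x)))^2)⁻¹)))
      (cs * r * (s*s) *
        ((Real.exp (s*ξ) + Real.exp (-(s*ξ))) *
            (-24 * ((Real.exp (s*ξ) + Real.exp (-(s*ξ)))^4)⁻¹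
              + 4 * ((Real.exp (s*ξ) + Real.exp (-(s*ξ)))^2)⁻¹)
          + (Real.exp (s*ξ) - Real.exp (-(s*ξ)))^2 *
            (96 * ((Real.exp (s*ξ) + Real.exp (-(s*ξ)))^5)⁻¹
              - 8 * ((Real.exp (s*ξ) + Real.exp (-(s*ξ)))^3)⁻¹))) ξ := by
    have h4 := (((hS ξ).pow 4).inv (pow_ne_zero 4 hne)).const_mul (-24:ℝ)
    have h2 := (((hS ξ).pow 2).inv (pow_ne_zero 2 hne)).const_mul (4:ℝ)
    have hmul := ((hT ξ).mul (h4.add h2)).const_mul (cs * r * s)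
    have hfun : (fun x => cs * r * (s * (Real.exp (s*x) - Real.exp (-(s*x))) *
        (-24 * ((Real.exp (s*x) + Real.exp (-(s*x)))^4)⁻¹
          + 4 * ((Real.exp (s*x) + Real.exp (-(s*x)))^2)⁻¹)))
        = (fun x => cs * r * s * ((Real.exp (s*x) - Real.exp (-(s*x))) *
        (-24 * ((Real.exp (s*x) + Real.exp (-(s*x)))^4)⁻¹
          + 4 * ((Real.exp (s*x) + Real.exp (-(s*x)))^2)⁻¹))) := by
      funext x; ring
    rw [hfun]
    refine hmul.congr_deriv ?_
    simp only [Pi.neg_apply, Pi.pow_apply, Pi.add_apply, Pi.inv_apply]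
    have := hSpos ξ
    field_simp
    ring
  have hdd : deriv (deriv w₀) ξ = cs * r * (s*s) *
        ((Real.exp (s*ξ) + Real.exp (-(s*ξ))) *
            (-24 * ((Real.exp (s*ξ) + Real.exp (-(s*ξ)))^4)⁻¹
              + 4 * ((Real.exp (s*ξ) + Real.exp (-(s*ξ)))^2)⁻¹)
          + (Real.exp (s*ξ) - Real.exp (-(s*ξ)))^2 *
            (96 * ((Real.exp (s*ξ) + Real.exp (-(s*ξ)))^5)⁻¹
              - 8 * ((Real.exp (s*ξ) + Real.exp (-(s*ξ)))^3)⁻¹)) := by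
    rw [hdw]
    exact hD2.deriv
  rw [hdd, hu ξ, hψ ξ]
  conv_lhs => rw [hw₀fun]
  simp only [sech]
  rw [mul_pow, hr2]
  rw [← hs2]
  have hA : (0:ℝ) < Real.exp (s*ξ) := Real.exp_pos _
  simp only [Real.exp_neg]
  have hAne : Real.exp (s*ξ) ≠ 0 := hA.ne'
  have hSne' : Real.exp (s*ξ) + (Real.exp (s*ξ))⁻¹ ≠ 0 := by positivity
  field_simp
  ring
end

section
/- With c* > 0 and α defined by 2α := -‖ψ*‖²_{L²} + 6⟨ψ*², u_{c*} ∂_c u_{c*}⟩_{L²}, where ψ* = 2c* sech²(√c* ξ) and u_c = √(2c) sech(√c ξ), one has α = 8 c*^{3/2} > 0. -/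
open MeasureTheory Real Filter Topology

noncomputable def T (x : ℝ) : ℝ := Real.sinh x / Real.cosh x

lemma T_neg (x : ℝ) : T (-x) = - T x := by
  simp [T, Real.sinh_neg, Real.cosh_neg, neg_div]

lemma hasDerivAt_T (x : ℝ) : HasDerivAt T ((Real.cosh x ^ 2)⁻¹) x := by
  have h := (Real.hasDerivAt_sinh x).div (Real.hasDerivAt_cosh x) (Real.cosh_pos x).ne'
  have h1 : Real.cosh x * Real.cosh x - Real.sinh x * Real.sinh x = 1 := by
    nlinarith [Real.cosh_sq x]
  rw [h1, one_div] at h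
  exact h

lemma abs_sinh_le_cosh (x : ℝ) : |Real.sinh x| ≤ Real.cosh x := by
  rw [abs_le]
  constructor
  · nlinarith [Real.sinh_add_cosh x, Real.exp_pos x]
  · nlinarith [Real.cosh_sub_sinh x, Real.exp_pos (-x)]

lemma sq_le_sinh_sq (x : ℝ) : x ^ 2 ≤ Real.sinh x ^ 2 := by
  rcases le_or_gt 0 x with h | h
  · have h2 : x ≤ Real.sinh x := Real.self_le_sinh_iff.2 h
    nlinarith
  · have h2 : -x ≤ Real.sinh (-x) := Real.self_le_sinh_iff.2 (by linarith)
    rw [Real.sinh_neg] at h2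
    nlinarith

lemma one_add_sq_le_cosh_sq (x : ℝ) : 1 + x ^ 2 ≤ Real.cosh x ^ 2 := by
  nlinarith [Real.cosh_sq x, sq_le_sinh_sq x]

lemma one_le_cosh' (x : ℝ) : 1 ≤ Real.cosh x := by
  nlinarith [one_add_sq_le_cosh_sq x, Real.cosh_pos x, sq_nonneg x]

lemma abs_le_cosh (x : ℝ) : |x| ≤ Real.cosh x := by
  nlinarith [one_add_sq_le_cosh_sq x, Real.cosh_pos x, abs_nonneg x, sq_abs x]

lemma tendsto_cosh_atTop' : Tendsto Real.cosh atTop atTop := by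
  apply tendsto_atTop_mono (fun x => ?_)
    (Real.tendsto_exp_atTop.atTop_div_const (by norm_num : (0:ℝ) < 2))
  rw [Real.cosh_eq]
  have := Real.exp_pos (-x)
  linarith

lemma T_tendsto_atTop : Tendsto T atTop (𝓝 1) := by
  have key : ∀ x : ℝ, T x = (1 - Real.exp (-2*x)) / (1 + Real.exp (-2*x)) := by
    intro x
    have h0 : Real.exp x ≠ 0 := (Real.exp_pos x).ne'
    have h2 : Real.exp (-2*x) = (Real.exp x)⁻¹ * (Real.exp x)⁻¹ := by
      rw [← Real.exp_neg, ← Real.exp_add]; ring_nf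
    have h3 : (0:ℝ) < 1 + Real.exp (-2*x) := by positivity
    rw [T, Real.sinh_eq, Real.cosh_eq,
      div_eq_div_iff (by positivity : ((Real.exp x + Real.exp (-x))/2 : ℝ) ≠ 0) h3.ne']
    rw [h2, Real.exp_neg]
    field_simp
  have he : Tendsto (fun x : ℝ => Real.exp (-2*x)) atTop (𝓝 0) :=
    Real.tendsto_exp_atBot.comp (tendsto_id.const_mul_atTop_of_neg (by norm_num : (-2:ℝ) < 0))
  have hT : Tendsto T atTop (𝓝 ((1-0)/(1+0))) := by
    rw [funext key]
    exact (tendsto_const_nhds.sub he).div (tendsto_const_nhds.add he)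
      (by norm_num : (1:ℝ) + 0 ≠ 0)
  norm_num at hT
  exact hT

lemma T_tendsto_atBot : Tendsto T atBot (𝓝 (-1)) := by
  have h := (T_tendsto_atTop.comp tendsto_neg_atBot_atTop).neg
  have hfe : T = fun x => -(T (-x)) := by
    funext x; rw [T_neg, neg_neg]
  rw [hfe]
  exact h

lemma X_tendsto_atTop : Tendsto (fun x : ℝ => x * (Real.cosh x ^ 6)⁻¹) atTop (𝓝 0) := by
  apply squeeze_zero_norm' (a := fun x => (Real.cosh x)⁻¹)
  · filter_upwards [eventually_ge_atTop (0:ℝ)] with x hx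
    have hch := Real.cosh_pos x
    have h1 : x ≤ Real.cosh x := (le_abs_self x).trans (abs_le_cosh x)
    have h2 : 1 ≤ Real.cosh x := one_le_cosh' x
    rw [Real.norm_eq_abs, abs_mul, abs_of_nonneg hx,
      abs_inv, abs_of_pos (pow_pos hch 6), ← div_eq_mul_inv, ← one_div,
      div_le_div_iff₀ (by positivity) hch]
    nlinarith [mul_le_mul_of_nonneg_right h1 hch.le,
      pow_le_pow_right₀ h2 (show 2 ≤ 6 by norm_num)]
  · exact tendsto_inv_atTop_zero.comp tendsto_cosh_atTop'

lemma X_tendsto_atBot : Tendsto (fun x : ℝ => x * (Real.cosh x ^ 6)⁻¹) atBot (𝓝 0) := by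
  have h := (X_tendsto_atTop.comp tendsto_neg_atBot_atTop).neg
  rw [neg_zero] at h
  have hfe : (fun x : ℝ => x * (Real.cosh x ^ 6)⁻¹)
      = fun x => -((-x) * (Real.cosh (-x) ^ 6)⁻¹) := by
    funext x; rw [Real.cosh_neg]; ring
  rw [hfe]
  exact h
/-- The soliton family `u_c(ξ) = √(2c) sech(√c ξ)`. -/
noncomputable def solitonU (c ξ : ℝ) : ℝ := Real.sqrt (2 * c) * sech (Real.sqrt c * ξ)

theorem alpha_value
    (cs : ℝ) (hcs : 0 < cs) (ψ : ℝ → ℝ) (α : ℝ)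
    (hψ : ∀ ξ : ℝ, ψ ξ = 2 * cs * sech (Real.sqrt cs * ξ) ^ 2)
    (hα : 2 * α = -(∫ ξ : ℝ, (ψ ξ) ^ 2)
      + 6 * ∫ ξ : ℝ, (ψ ξ) ^ 2 * (solitonU cs ξ * deriv (fun c => solitonU c ξ) cs)) :
    α = 8 * cs ^ ((3 : ℝ) / 2) ∧ 0 < α := by
  set a := Real.sqrt cs with ha_def
  have ha : 0 < a := Real.sqrt_pos.2 hcs
  have hane : a ≠ 0 := ha.ne'
  have haa : a * a = cs := Real.mul_self_sqrt hcs.le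
  have hsech : ∀ x : ℝ, sech x = (Real.cosh x)⁻¹ := by
    intro x; rw [sech, Real.cosh_eq, inv_div]
  -- pointwise formula 1
  have hψ2 : ∀ ξ : ℝ, (ψ ξ)^2 = 4*cs^2*((Real.cosh (a*ξ))^4)⁻¹ := by
    intro ξ
    rw [hψ, hsech]
    have hc := (Real.cosh_pos (a*ξ)).ne'
    field_simp
    ring
  -- derivative of the soliton family in c
  have h2cs : (0:ℝ) < 2*cs := by linarith
  have hs2 : Real.sqrt (2*cs) ≠ 0 := (Real.sqrt_pos.2 h2cs).ne'
  have hs2sq : Real.sqrt (2*cs) * Real.sqrt (2*cs) = 2*cs := Real.mul_self_sqrt h2cs.le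
  have hDval : ∀ ξ : ℝ, deriv (fun c => solitonU c ξ) cs
      = (Real.sqrt (2*cs))⁻¹ * (Real.cosh (a*ξ))⁻¹
        + Real.sqrt (2*cs) * (-(Real.sinh (a*ξ) * ((2*a)⁻¹*ξ)) / (Real.cosh (a*ξ))^2) := by
    intro ξ
    have hs1 : HasDerivAt (fun c : ℝ => Real.sqrt (2*c)) ((Real.sqrt (2*cs))⁻¹) cs := by
      have h := (Real.hasDerivAt_sqrt h2cs.ne').comp cs ((hasDerivAt_id cs).const_mul 2)
      have h2 : HasDerivAt (fun c : ℝ => Real.sqrt (2*c)) (1/(2*Real.sqrt (2*cs)) * (2*1)) cs := h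
      convert h2 using 1
      field_simp
    have hsq : HasDerivAt (fun c : ℝ => Real.sqrt c * ξ) ((2*a)⁻¹*ξ) cs := by
      have h := (Real.hasDerivAt_sqrt hcs.ne').mul_const ξ
      have h2 : HasDerivAt (fun c : ℝ => Real.sqrt c * ξ) (1/(2*a) * ξ) cs := h
      convert h2 using 1
      field_simp
    have hch : HasDerivAt (fun c : ℝ => Real.cosh (Real.sqrt c * ξ))
        (Real.sinh (a*ξ) * ((2*a)⁻¹*ξ)) cs := by
      have h := (Real.hasDerivAt_cosh (a*ξ)).comp cs hsq
      exact h
    have hinv := hch.inv (Real.cosh_pos (a*ξ)).ne'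
    have heq : (fun c => solitonU c ξ)
        = fun c : ℝ => Real.sqrt (2*c) * (Real.cosh (Real.sqrt c * ξ))⁻¹ := by
      funext c; rw [solitonU, hsech]
    rw [heq]
    exact (hs1.mul hinv).deriv
  -- pointwise formula 2
  have hψ4 : ∀ ξ : ℝ, (ψ ξ)^2 * (solitonU cs ξ * deriv (fun c => solitonU c ξ) cs)
      = 4*cs^2*(((Real.cosh (a*ξ))^6)⁻¹ - a*ξ*Real.sinh (a*ξ)*((Real.cosh (a*ξ))^7)⁻¹) := by
    intro ξ
    rw [hψ2, hDval, solitonU, hsech]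
    have hc := (Real.cosh_pos (a*ξ)).ne'
    field_simp
    ring_nf
    have h22 : Real.sqrt 2 * Real.sqrt 2 = 2 := Real.mul_self_sqrt (by norm_num)
    have hc' : Real.cosh (ξ * Real.sqrt cs) = Real.cosh (a*ξ) := by rw [← ha_def, mul_comm]
    have hs' : Real.sqrt (cs*2)^2 = cs*2 := Real.sq_sqrt (by linarith)
    rw [hc', hs']
    linear_combination (2*ξ*Real.sinh (a*ξ)*Real.cosh (a*ξ)) * haa
  -- derivative helpers
  have hy : ∀ ξ : ℝ, HasDerivAt (fun t : ℝ => a*t) a ξ := by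
    intro ξ
    simpa using (hasDerivAt_id ξ).const_mul a
  have hTc : ∀ ξ : ℝ, HasDerivAt (fun t : ℝ => T (a*t)) ((Real.cosh (a*ξ) ^ 2)⁻¹ * a) ξ :=
    fun ξ => (hasDerivAt_T (a*ξ)).comp ξ (hy ξ)
  -- antiderivative 1
  have hA1 : ∀ ξ : ℝ, HasDerivAt
      (fun t : ℝ => 4*cs^2/a * (T (a*t) - T (a*t)^3/3))
      (4*cs^2*((Real.cosh (a*ξ))^4)⁻¹) ξ := by
    intro ξ
    have h := ((hTc ξ).sub (((hTc ξ).pow 3).div_const 3)).const_mul (4*cs^2/a)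
    refine h.congr_deriv (Eq.symm ?_)
    have hc := (Real.cosh_pos (a*ξ)).ne'
    have hsq := Real.cosh_sq (a*ξ)
    simp only [T]
    have hs2 : Real.sinh (a*ξ)^2 = Real.cosh (a*ξ)^2 - 1 := by linarith
    norm_num
    rw [div_pow, hs2]
    field_simp
    ring
  -- antiderivative 2
  have hch6 : ∀ ξ : ℝ, HasDerivAt (fun t : ℝ => Real.cosh (a*t)^6)
      (6 * Real.cosh (a*ξ)^5 * (Real.sinh (a*ξ) * a)) ξ := by
    intro ξ
    exact ((Real.hasDerivAt_cosh (a*ξ)).comp ξ (hy ξ)).pow 6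
  have hXd : ∀ ξ : ℝ, HasDerivAt (fun t : ℝ => (a*t) * (Real.cosh (a*t)^6)⁻¹)
      (a * (Real.cosh (a*ξ)^6)⁻¹
        + (a*ξ) * (-(6 * Real.cosh (a*ξ)^5 * (Real.sinh (a*ξ) * a)) / (Real.cosh (a*ξ)^6)^2)) ξ :=
    fun ξ => (hy ξ).mul ((hch6 ξ).inv (pow_ne_zero _ (Real.cosh_pos _).ne'))
  have hA2 : ∀ ξ : ℝ, HasDerivAt
      (fun t : ℝ => 4*cs^2/a * ((5/6) * (T (a*t) - (2/3)*T (a*t)^3 + T (a*t)^5/5)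
          + (1/6) * ((a*t) * (Real.cosh (a*t)^6)⁻¹)))
      (4*cs^2*(((Real.cosh (a*ξ))^6)⁻¹ - a*ξ*Real.sinh (a*ξ)*((Real.cosh (a*ξ))^7)⁻¹)) ξ := by
    intro ξ
    have hG := ((hTc ξ).sub (((hTc ξ).pow 3).const_mul (2/3))).add (((hTc ξ).pow 5).div_const 5)
    have h := ((hG.const_mul (5/6)).add ((hXd ξ).const_mul (1/6))).const_mul (4*cs^2/a)
    refine h.congr_deriv (Eq.symm ?_)
    have hc := (Real.cosh_pos (a*ξ)).ne'
    have hsq := Real.cosh_sq (a*ξ)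
    simp only [T]
    have hs2 : Real.sinh (a*ξ)^2 = Real.cosh (a*ξ)^2 - 1 := by linarith
    norm_num
    rw [div_pow, div_pow, show Real.sinh (a*ξ)^4 = (Real.sinh (a*ξ)^2)^2 by ring, hs2]
    field_simp
    ring
  -- integrability
  have hcont1 : Continuous (fun ξ : ℝ => 4*cs^2*((Real.cosh (a*ξ))^4)⁻¹) := by
    apply continuous_const.mul
    apply Continuous.inv₀
    · exact (Real.continuous_cosh.comp (continuous_const.mul continuous_id)).pow 4
    · exact fun x => pow_ne_zero _ (Real.cosh_pos _).ne'
  have hsc : ∀ ξ : ℝ, 1 + cs*ξ^2 ≤ Real.cosh (a*ξ)^2 := by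
    intro ξ
    have h := one_add_sq_le_cosh_sq (a*ξ)
    nlinarith [haa]
  have hint1 : Integrable (fun ξ : ℝ => 4*cs^2*((Real.cosh (a*ξ))^4)⁻¹) := by
    refine (integrable_inv_one_add_sq.const_mul (4*cs*(1+cs))).mono'
      hcont1.aestronglyMeasurable ?_
    filter_upwards with ξ
    have hch := Real.cosh_pos (a*ξ)
    have h1 := one_le_cosh' (a*ξ)
    have h3 := hsc ξ
    rw [Real.norm_eq_abs, abs_of_pos (by positivity), ← div_eq_mul_inv, ← div_eq_mul_inv,
      div_le_div_iff₀ (by positivity) (by positivity)]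
    nlinarith [mul_le_mul h3 h3 (by positivity : (0:ℝ) ≤ 1 + cs*ξ^2) (by positivity : (0:ℝ) ≤ Real.cosh (a*ξ)^2),
      sq_nonneg ξ, sq_nonneg (cs*ξ^2), hcs, mul_nonneg hcs.le (sq_nonneg ξ)]
  have hcont2 : Continuous (fun ξ : ℝ =>
      4*cs^2*(((Real.cosh (a*ξ))^6)⁻¹ - a*ξ*Real.sinh (a*ξ)*((Real.cosh (a*ξ))^7)⁻¹)) := by
    have hc : Continuous (fun ξ : ℝ => a*ξ) := continuous_const.mul continuous_id
    apply continuous_const.mul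
    apply Continuous.sub
    · exact Continuous.inv₀ ((Real.continuous_cosh.comp hc).pow 6)
        (fun x => pow_ne_zero _ (Real.cosh_pos _).ne')
    · exact (hc.mul (Real.continuous_sinh.comp hc)).mul
        (Continuous.inv₀ ((Real.continuous_cosh.comp hc).pow 7)
          (fun x => pow_ne_zero _ (Real.cosh_pos _).ne'))
  have hint2 : Integrable (fun ξ : ℝ =>
      4*cs^2*(((Real.cosh (a*ξ))^6)⁻¹ - a*ξ*Real.sinh (a*ξ)*((Real.cosh (a*ξ))^7)⁻¹)) := by
    refine (integrable_inv_one_add_sq.const_mul (8*cs*(1+cs))).mono'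
      hcont2.aestronglyMeasurable ?_
    filter_upwards with ξ
    have hch := Real.cosh_pos (a*ξ)
    have h1 := one_le_cosh' (a*ξ)
    have h3 := hsc ξ
    have haξ : |a*ξ| ≤ Real.cosh (a*ξ) := abs_le_cosh (a*ξ)
    have hsh : |Real.sinh (a*ξ)| ≤ Real.cosh (a*ξ) := abs_sinh_le_cosh (a*ξ)
    have hrw : 4*cs^2*(((Real.cosh (a*ξ))^6)⁻¹ - a*ξ*Real.sinh (a*ξ)*((Real.cosh (a*ξ))^7)⁻¹)
        = 4*cs^2*(Real.cosh (a*ξ) - a*ξ*Real.sinh (a*ξ))/(Real.cosh (a*ξ))^7 := by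
      field_simp
    rw [Real.norm_eq_abs, hrw, abs_div, abs_of_pos (pow_pos hch 7), ← div_eq_mul_inv,
      div_le_div_iff₀ (by positivity) (by positivity)]
    have habs : |4*cs^2*(Real.cosh (a*ξ) - a*ξ*Real.sinh (a*ξ))|
        ≤ 4*cs^2*(Real.cosh (a*ξ) + Real.cosh (a*ξ)*Real.cosh (a*ξ)) := by
      rw [abs_mul, abs_of_pos (by positivity : (0:ℝ) < 4*cs^2)]
      have h5 : |Real.cosh (a*ξ) - a*ξ*Real.sinh (a*ξ)|
          ≤ Real.cosh (a*ξ) + Real.cosh (a*ξ)*Real.cosh (a*ξ) := by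
        calc |Real.cosh (a*ξ) - a*ξ*Real.sinh (a*ξ)|
            ≤ |Real.cosh (a*ξ)| + |a*ξ*Real.sinh (a*ξ)| := abs_sub _ _
          _ ≤ Real.cosh (a*ξ) + Real.cosh (a*ξ)*Real.cosh (a*ξ) := by
              rw [abs_of_pos hch, abs_mul]
              exact add_le_add le_rfl
                (mul_le_mul haξ hsh (abs_nonneg _) hch.le)
      exact mul_le_mul_of_nonneg_left h5 (by positivity)
    have e1 : cs*(1+ξ^2) ≤ (1+cs)*(Real.cosh (a*ξ)^2) := by
      have k1 := mul_le_mul_of_nonneg_left h3 (show (0:ℝ) ≤ 1+cs by positivity)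
      have hq : (0:ℝ) ≤ cs^2*ξ^2 := by positivity
      have k2 : cs*(1+ξ^2) ≤ (1+cs)*(1+cs*ξ^2) := by linarith [hq]
      linarith [k1, k2]
    have e2 : Real.cosh (a*ξ) + Real.cosh (a*ξ)*Real.cosh (a*ξ) ≤ 2*Real.cosh (a*ξ)^2 := by
      linarith [mul_le_mul_of_nonneg_left h1 hch.le]
    have e3 : Real.cosh (a*ξ)^4 ≤ Real.cosh (a*ξ)^7 :=
      pow_le_pow_right₀ h1 (by norm_num)
    calc |4*cs^2*(Real.cosh (a*ξ) - a*ξ*Real.sinh (a*ξ))| * (1+ξ^2)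
        ≤ (4*cs^2*(Real.cosh (a*ξ) + Real.cosh (a*ξ)*Real.cosh (a*ξ))) * (1+ξ^2) :=
          mul_le_mul_of_nonneg_right habs (by positivity)
      _ ≤ (4*cs^2*(2*Real.cosh (a*ξ)^2)) * (1+ξ^2) :=
          mul_le_mul_of_nonneg_right (mul_le_mul_of_nonneg_left e2 (by positivity)) (by positivity)
      _ = 8*cs*Real.cosh (a*ξ)^2*(cs*(1+ξ^2)) := by ring
      _ ≤ 8*cs*Real.cosh (a*ξ)^2*((1+cs)*(Real.cosh (a*ξ)^2)) :=
          mul_le_mul_of_nonneg_left e1 (by positivity)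
      _ = 8*cs*(1+cs)*Real.cosh (a*ξ)^4 := by ring
      _ ≤ 8*cs*(1+cs)*Real.cosh (a*ξ)^7 :=
          mul_le_mul_of_nonneg_left e3 (by positivity)
  -- limits
  have hmt : Tendsto (fun ξ : ℝ => a*ξ) atTop atTop := Tendsto.const_mul_atTop ha tendsto_id
  have hmb : Tendsto (fun ξ : ℝ => a*ξ) atBot atBot := Tendsto.const_mul_atBot ha tendsto_id
  have hTt : Tendsto (fun ξ : ℝ => T (a*ξ)) atTop (𝓝 1) := T_tendsto_atTop.comp hmt
  have hTb : Tendsto (fun ξ : ℝ => T (a*ξ)) atBot (𝓝 (-1)) := T_tendsto_atBot.comp hmb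
  have hXt : Tendsto (fun ξ : ℝ => (a*ξ) * (Real.cosh (a*ξ)^6)⁻¹) atTop (𝓝 0) :=
    X_tendsto_atTop.comp hmt
  have hXb : Tendsto (fun ξ : ℝ => (a*ξ) * (Real.cosh (a*ξ)^6)⁻¹) atBot (𝓝 0) :=
    X_tendsto_atBot.comp hmb
  -- integral values
  have hI1 : (∫ ξ : ℝ, 4*cs^2*((Real.cosh (a*ξ))^4)⁻¹)
      = 4*cs^2/a * (1 - 1^3/3) - 4*cs^2/a * (-1 - (-1:ℝ)^3/3) := by
    refine MeasureTheory.integral_of_hasDerivAt_of_tendsto hA1 hint1 ?_ ?_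
    · exact (hTb.sub ((hTb.pow 3).div_const 3)).const_mul _
    · exact (hTt.sub ((hTt.pow 3).div_const 3)).const_mul _
  have hI2 : (∫ ξ : ℝ, 4*cs^2*(((Real.cosh (a*ξ))^6)⁻¹ - a*ξ*Real.sinh (a*ξ)*((Real.cosh (a*ξ))^7)⁻¹))
      = 4*cs^2/a * ((5/6) * (1 - (2/3)*1^3 + 1^5/5) + (1/6)*0)
        - 4*cs^2/a * ((5/6) * (-1 - (2/3)*(-1:ℝ)^3 + (-1:ℝ)^5/5) + (1/6)*0) := by
    refine MeasureTheory.integral_of_hasDerivAt_of_tendsto hA2 hint2 ?_ ?_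
    · exact (((hTb.sub ((hTb.pow 3).const_mul (2/3))).add
        ((hTb.pow 5).div_const 5)).const_mul (5/6)).add (hXb.const_mul (1/6)) |>.const_mul _
    · exact (((hTt.sub ((hTt.pow 3).const_mul (2/3))).add
        ((hTt.pow 5).div_const 5)).const_mul (5/6)).add (hXt.const_mul (1/6)) |>.const_mul _
  -- assemble
  have e1 : (∫ ξ : ℝ, (ψ ξ)^2) = ∫ ξ : ℝ, 4*cs^2*((Real.cosh (a*ξ))^4)⁻¹ := by
    simp only [hψ2]
  have e2 : (∫ ξ : ℝ, (ψ ξ)^2 * (solitonU cs ξ * deriv (fun c => solitonU c ξ) cs))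
      = ∫ ξ : ℝ, 4*cs^2*(((Real.cosh (a*ξ))^6)⁻¹ - a*ξ*Real.sinh (a*ξ)*((Real.cosh (a*ξ))^7)⁻¹) := by
    simp only [hψ4]
  rw [e1, e2, hI1, hI2] at hα
  have hα' : 2*α = 16 * (cs^2/a) := by
    rw [hα]; ring
  clear hα e1 e2 hI1 hI2 hint1 hint2 hcont1 hcont2 hA1 hA2 hXd hch6 hTc hy hψ4 hψ2 hDval
  clear hsc hXt hXb hTt hTb hmt hmb hψ hsech
  clear_value a
  have hrpow : cs ^ ((3:ℝ)/2) * a = cs^2 := by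
    rw [ha_def, Real.sqrt_eq_rpow, ← Real.rpow_add hcs]
    rw [show (3:ℝ)/2 + 1/2 = ((2:ℕ):ℝ) by norm_num, Real.rpow_natCast]
  have hcsr : cs ^ ((3:ℝ)/2) = cs^2/a := (eq_div_iff hane).2 hrpow
  constructor
  · rw [hcsr]; linarith only [hα']
  · have h9 : (0:ℝ) < cs^2/a := by positivity
    linarith only [hα', h9]
end
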